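/- arXiv:1911.12622 — 2 statements merged into one kernel-verified Lean document; each statement's English description precedes it below -/
import Mathlib

section
/- For every linear subspace W of F^n over a field F, there exists an n×n reduced row echelon form R over F such that the row space of R equals W. -/
/-- Every nonzero vector has a minimal nonzero coordinate. -/
lemma exists_min_nonzero {F : Type*} [Field F] {n : ℕ} (w : Fin n → F) (hw : w ≠ 0) :
    ∃ k : Fin n, w k ≠ 0 ∧ ∀ j, j < k → w j = 0 := by
  classical
  have hne : (Finset.univ.filter (fun j => w j ≠ 0)).Nonempty := by
    rcases Function.ne_iff.mp hw with ⟨k, hk⟩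
    exact ⟨k, by simp at hk ⊢; exact hk⟩
  refine ⟨(Finset.univ.filter (fun j => w j ≠ 0)).min' hne, ?_, ?_⟩
  · have := Finset.min'_mem _ hne; simpa using this
  · intro j hj
    by_contra hj0
    have : (Finset.univ.filter fun j => w j ≠ 0).min' hne ≤ j :=
      Finset.min'_le _ _ (by simp [hj0])
    exact absurd hj (not_lt.mpr this)

/-- A submodule of `Fᵐ` containing, for each index, a vector with leading nonzero entry
at that index, is everything. -/
lemma submodule_eq_top_of_triangular {F : Type*} [Field F] {m : ℕ}
    (S : Submodule F (Fin m → F))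
    (h : ∀ i : Fin m, ∃ v ∈ S, v i ≠ 0 ∧ ∀ j, j < i → v j = 0) : S = ⊤ := by
  have key : ∀ s : ℕ, ∀ v : Fin m → F, (∀ j : Fin m, (j : ℕ) + s < m → v j = 0) → v ∈ S := by
    intro s
    induction s with
    | zero =>
      intro v hv
      have hv0 : v = 0 := funext fun j => hv j (by omega)
      simp [hv0]
    | succ s ih =>
      intro v hv
      by_cases hs : s < m
      · set i : Fin m := ⟨m - s - 1, by omega⟩ with hi
        obtain ⟨u, huS, hui, hulow⟩ := h i
        have hki : v - (v i / u i) • u ∈ S := by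
          apply ih
          intro j hj
          rcases Nat.lt_or_ge ((j : ℕ) + s + 1) m with hj1 | hj1
          · have hj2 : j < i := by rw [Fin.lt_def]; simp [hi]; omega
            simp [hv j hj1, hulow j hj2]
          · have hji : j = i := by
              apply Fin.ext; simp [hi]; omega
            subst hji
            simp [div_mul_cancel₀ (v i) hui]
        have := S.add_mem hki (S.smul_mem (v i / u i) huS)
        simpa using this
      · apply ih
        intro j hj
        omega
  rw [eq_top_iff]
  intro v _
  exact key m v (fun j hj => absurd hj (by omega))

/-- `k` is the pivot column of row `i` of `R`: the leading (first nonzero) entry of row `i`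
is a `1` in column `k`, and column `k` has zeros in all other positions. -/
def IsPivot {F : Type*} [Field F] {n : ℕ} (R : Matrix (Fin n) (Fin n) F) (i k : Fin n) : Prop :=
  R i k = 1 ∧ (∀ j : Fin n, j < k → R i j = 0) ∧ (∀ i' : Fin n, i' ≠ i → R i' k = 0)

/-- `R` is in reduced row echelon form: every zero row lies below all nonzero rows, every
nonzero row has a pivot (leading `1` whose column is otherwise zero), and pivot columns
strictly increase down the rows. -/
def IsRREF {F : Type*} [Field F] {n : ℕ} (R : Matrix (Fin n) (Fin n) F) : Prop :=
  (∀ i j : Fin n, i < j → R i = 0 → R j = 0) ∧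
  (∀ i : Fin n, R i ≠ 0 → ∃ k : Fin n, IsPivot R i k) ∧
  (∀ i i' k k' : Fin n, i < i' → IsPivot R i k → IsPivot R i' k' → k < k')

/-- Every linear subspace of `Fⁿ` is the row space of some `n × n` reduced row echelon form. -/
theorem exists_rref_rowSpace_eq {F : Type*} [Field F] {n : ℕ}
    (W : Submodule F (Fin n → F)) :
    ∃ R : Matrix (Fin n) (Fin n) F, IsRREF R ∧ Submodule.span F (Set.range R) = W := by
  classical
  -- the set of pivot columns
  set P : Finset (Fin n) :=
    Finset.univ.filter (fun k => ∃ w ∈ W, w k ≠ 0 ∧ ∀ j, j < k → w j = 0) with hP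
  have hmemP : ∀ k, k ∈ P ↔ ∃ w ∈ W, w k ≠ 0 ∧ ∀ j, j < k → w j = 0 := by
    intro k; simp [hP]
  -- a vector of `W` vanishing on all pivot columns is zero
  have lemA : ∀ w ∈ W, (∀ k ∈ P, w k = 0) → w = 0 := by
    intro w hw h0
    by_contra hne
    obtain ⟨k, hk, hmin⟩ := exists_min_nonzero w hne
    exact hk (h0 k ((hmemP k).mpr ⟨w, hw, hk, hmin⟩))
  set m := P.card with hm
  have hmn : m ≤ n := by simpa using P.card_le_univ
  set σ : Fin m ↪o Fin n := P.orderEmbOfFin hm.symm with hσ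
  have hσmem : ∀ i, σ i ∈ P := fun i => P.orderEmbOfFin_mem hm.symm i
  have hσsurj : ∀ k ∈ P, ∃ i, σ i = k := by
    intro k hk
    have : k ∈ Set.range σ := by
      rw [hσ]
      rw [Finset.range_orderEmbOfFin]
      exact hk
    exact this
  have hσmono : StrictMono σ := σ.strictMono
  -- the restriction of W to the pivot columns is everything
  set ρ : (Fin n → F) →ₗ[F] (Fin m → F) := LinearMap.funLeft F F σ with hρ
  have hStop : W.map ρ = ⊤ := by
    apply submodule_eq_top_of_triangular
    intro i
    obtain ⟨w, hw, hwk, hwlow⟩ := (hmemP (σ i)).mp (hσmem i)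
    refine ⟨ρ w, ⟨w, hw, rfl⟩, ?_, ?_⟩
    · simpa [hρ, LinearMap.funLeft_apply] using hwk
    · intro j hj
      simpa [hρ, LinearMap.funLeft_apply] using hwlow (σ j) (hσmono hj)
  -- extract the canonical rows
  have he : ∀ i : Fin m, ∃ w ∈ W, ρ w = Pi.single i 1 := by
    intro i
    have : (Pi.single i 1 : Fin m → F) ∈ W.map ρ := by rw [hStop]; trivial
    simpa [Submodule.mem_map] using this
  choose e heW heρ using he
  have heval : ∀ i i' : Fin m, e i (σ i') = if i' = i then 1 else 0 := by
    intro i i'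
    have := congrFun (heρ i) i'
    simpa [hρ, LinearMap.funLeft_apply, Pi.single_apply] using this
  have hlead : ∀ i : Fin m, ∀ j, j < σ i → e i j = 0 := by
    intro i j hj
    have hne : e i ≠ 0 := by
      intro h0
      have := heval i i
      rw [h0] at this
      simp at this
    obtain ⟨k, hk, hmin⟩ := exists_min_nonzero (e i) hne
    have hkP : k ∈ P := (hmemP k).mpr ⟨e i, heW i, hk, hmin⟩
    obtain ⟨i₀, hi₀⟩ := hσsurj k hkP
    have : i₀ = i := by
      by_contra hcon
      have := heval i i₀
      rw [hi₀, if_neg hcon] at this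
      exact hk this
    subst this
    exact hmin j (hi₀ ▸ hj)
  -- the RREF matrix
  set R : Matrix (Fin n) (Fin n) F :=
    fun i => if h : (i : ℕ) < m then e ⟨i, h⟩ else 0 with hR
  have hRrow : ∀ (i : Fin n) (h : (i : ℕ) < m), R i = e ⟨i, h⟩ := by
    intro i h; simp [hR, h]
  have hRzero : ∀ (i : Fin n), ¬ (i : ℕ) < m → R i = 0 := by
    intro i h; simp [hR, h]
  have hRne : ∀ (i : Fin n) (h : (i : ℕ) < m), R i ≠ 0 := by
    intro i h h0
    have : R i (σ ⟨i, h⟩) = 1 := by rw [hRrow i h]; simpa using heval ⟨i, h⟩ ⟨i, h⟩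
    rw [h0] at this
    simp at this
  -- pivot of row i is σ i
  have hPiv : ∀ (i : Fin n) (h : (i : ℕ) < m), IsPivot R i (σ ⟨i, h⟩) := by
    intro i h
    refine ⟨by rw [hRrow i h]; simpa using heval ⟨i, h⟩ ⟨i, h⟩, ?_, ?_⟩
    · intro j hj
      rw [hRrow i h]
      exact hlead _ j hj
    · intro i' hi'
      by_cases h' : (i' : ℕ) < m
      · rw [hRrow i' h']
        have hne : (⟨i, h⟩ : Fin m) ≠ ⟨i', h'⟩ := by
          intro hcon
          apply hi'
          have := congrArg (Fin.val) hcon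
          exact Fin.ext this.symm
        rw [heval ⟨i', h'⟩ ⟨i, h⟩, if_neg hne]
      · rw [hRzero i' h']; rfl
  have hPivUniq : ∀ (i k : Fin n), IsPivot R i k → ∃ h : (i : ℕ) < m, k = σ ⟨i, h⟩ := by
    intro i k ⟨h1, h2, _⟩
    by_cases h : (i : ℕ) < m
    · refine ⟨h, ?_⟩
      rcases lt_trichotomy k (σ ⟨i, h⟩) with hlt | heq | hgt
      · exfalso
        have := (hPiv i h).1
        have h0 : R i k = 0 := by rw [hRrow i h]; exact hlead _ k hlt
        rw [h0] at h1
        exact zero_ne_one h1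
      · exact heq
      · exfalso
        have := h2 (σ ⟨i, h⟩) hgt
        have h1' := (hPiv i h).1
        rw [this] at h1'
        exact zero_ne_one h1'
    · exfalso
      rw [hRzero i h] at h1
      exact zero_ne_one h1
  refine ⟨R, ⟨?_, ?_, ?_⟩, ?_⟩
  · -- zero rows at bottom
    intro i j hij hi0
    by_cases h : (j : ℕ) < m
    · exfalso
      have hi : (i : ℕ) < m := lt_trans (Fin.lt_def.mp hij) h
      exact hRne i hi hi0
    · exact hRzero j h
  · -- nonzero rows have pivots
    intro i hi
    by_cases h : (i : ℕ) < m
    · exact ⟨σ ⟨i, h⟩, hPiv i h⟩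
    · exact absurd (hRzero i h) hi
  · -- pivots increase
    intro i i' k k' hii' hp hp'
    obtain ⟨h, rfl⟩ := hPivUniq i k hp
    obtain ⟨h', rfl⟩ := hPivUniq i' k' hp'
    exact hσmono (Fin.mk_lt_mk.mpr hii')
  · -- row space equals W
    apply le_antisymm
    · rw [Submodule.span_le]
      rintro _ ⟨i, rfl⟩
      by_cases h : (i : ℕ) < m
      · rw [hRrow i h]; exact heW _
      · rw [hRzero i h]; exact W.zero_mem
    · intro w hw
      have hsum : ∑ i : Fin m, w (σ i) • e i ∈ W :=
        Submodule.sum_mem _ (fun i _ => W.smul_mem _ (heW i))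
      have hdiff : w - ∑ i : Fin m, w (σ i) • e i = 0 := by
        apply lemA _ (W.sub_mem hw hsum)
        intro k hk
        obtain ⟨i₀, rfl⟩ := hσsurj k hk
        simp only [Pi.sub_apply, Finset.sum_apply, Pi.smul_apply, smul_eq_mul]
        rw [Finset.sum_eq_single i₀]
        · rw [heval i₀ i₀, if_pos rfl]; ring
        · intro i _ hne
          rw [heval i i₀, if_neg (fun hcon => hne (by rw [hcon]))]; ring
        · intro habs; exact absurd (Finset.mem_univ i₀) habs
      have hwsum : w = ∑ i : Fin m, w (σ i) • e i := by
        rw [sub_eq_zero] at hdiff; exact hdiff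
      rw [hwsum]
      apply Submodule.sum_mem
      intro i _
      apply Submodule.smul_mem
      apply Submodule.subset_span
      refine ⟨⟨(i : ℕ), lt_of_lt_of_le i.2 hmn⟩, ?_⟩
      rw [hRrow _ i.2]
end

section
/- Over a finite field F with q elements, |Gr_F(d,n)| is a monic polynomial expression in q of degree d(n−d) with nonnegative integer coefficients: |Gr_F(d,n)| = Σ_{ℓ=0}^{d(n−d)} c_ℓ q^{d(n−d)−ℓ}, where c_ℓ is the number of tuples (s_1,...,s_d) ∈ S^(d) with Σ_i s_i = ℓ + d(d+1)/2. -/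
open Module Finset

section Combinatorial

/-- The finset of admissible strictly increasing tuples. -/
def grSB (n d : ℕ) : Finset (Fin d → ℕ) :=
  (Fintype.piFinset fun i : Fin d => Finset.Icc 1 (n - d + (i : ℕ) + 1)).filter
    fun s => ∀ i j : Fin d, i < j → s i < s j

lemma mem_grSB {n d : ℕ} {s : Fin d → ℕ} :
    s ∈ grSB n d ↔ (∀ i, 1 ≤ s i) ∧ StrictMono s ∧ ∀ i : Fin d, s i ≤ n - d + (i : ℕ) + 1 := by
  simp only [grSB, Finset.mem_filter, Fintype.mem_piFinset, Finset.mem_Icc]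
  constructor
  · rintro ⟨h1, h2⟩
    exact ⟨fun i => (h1 i).1, fun i j hij => h2 i j hij, fun i => (h1 i).2⟩
  · rintro ⟨h1, h2, h3⟩
    exact ⟨fun i => ⟨h1 i, h3 i⟩, fun i j hij => h2 hij⟩

lemma grSB_lb {d : ℕ} {s : Fin d → ℕ} (h1 : ∀ i, 1 ≤ s i) (h2 : StrictMono s) :
    ∀ i : Fin d, (i : ℕ) + 1 ≤ s i := by
  suffices H : ∀ k (hk : k < d), k + 1 ≤ s ⟨k, hk⟩ by
    intro i; simpa using H i.1 i.2
  intro k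
  induction k with
  | zero => intro hk; exact h1 _
  | succ k ih =>
    intro hk
    have hk' : k < d := Nat.lt_of_succ_lt hk
    have := h2 (show (⟨k, hk'⟩ : Fin d) < ⟨k + 1, hk⟩ from by simp [Fin.lt_def])
    have := ih hk'
    omega

lemma grSum_id (d : ℕ) : ∑ i : Fin d, ((i : ℕ) + 1) = d * (d + 1) / 2 := by
  rw [Fin.sum_univ_eq_sum_range (fun k => k + 1) d]
  induction d with
  | zero => simp
  | succ d ih =>
    rw [Finset.sum_range_succ, ih]
    have e : (d + 1) * (d + 1 + 1) = d * (d + 1) + 2 * (d + 1) := by ring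
    omega

lemma c2_succ (d : ℕ) : (d + 1) * (d + 1 + 1) / 2 = d * (d + 1) / 2 + (d + 1) := by
  have e : (d + 1) * (d + 1 + 1) = d * (d + 1) + 2 * (d + 1) := by ring
  omega

lemma grSB_sum_lb {n d : ℕ} {s : Fin d → ℕ} (hs : s ∈ grSB n d) :
    d * (d + 1) / 2 ≤ ∑ i, s i := by
  obtain ⟨h1, h2, _⟩ := mem_grSB.mp hs
  calc d * (d + 1) / 2 = ∑ i : Fin d, ((i : ℕ) + 1) := (grSum_id d).symm
    _ ≤ ∑ i, s i := Finset.sum_le_sum fun i _ => grSB_lb h1 h2 i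

lemma grSB_sum_ub {n d : ℕ} (hd : d ≤ n) {s : Fin d → ℕ} (hs : s ∈ grSB n d) :
    ∑ i, s i ≤ d * (n - d) + d * (d + 1) / 2 := by
  obtain ⟨_, _, h3⟩ := mem_grSB.mp hs
  calc ∑ i, s i ≤ ∑ i : Fin d, (n - d + (i : ℕ) + 1) := Finset.sum_le_sum fun i _ => h3 i
    _ = ∑ i : Fin d, ((n - d) + ((i : ℕ) + 1)) := by
        apply Finset.sum_congr rfl; intro i _; omega
    _ = d * (n - d) + d * (d + 1) / 2 := by
        rw [Finset.sum_add_distrib, Finset.sum_const, grSum_id]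
        simp [mul_comm]

/-- The combinatorial (Gaussian-binomial) polynomial value. -/
def grGP (q n d : ℕ) : ℕ :=
  ∑ s ∈ grSB n d, q ^ (d * (n - d) + d * (d + 1) / 2 - ∑ i, s i)

lemma grSB_zero (n : ℕ) : grSB n 0 = {fun i => i.elim0} := by
  apply Finset.eq_singleton_iff_unique_mem.mpr
  constructor
  · rw [mem_grSB]
    exact ⟨fun i => i.elim0, fun a b hab => a.elim0, fun i => i.elim0⟩
  · intro s _
    funext i; exact i.elim0

lemma grGP_zero (q n : ℕ) : grGP q n 0 = 1 := by
  rw [grGP, grSB_zero, Finset.sum_singleton]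
  simp

lemma grSB_diag (n : ℕ) : grSB n n = {(fun i => (i : ℕ) + 1 : Fin n → ℕ)} := by
  apply Finset.eq_singleton_iff_unique_mem.mpr
  constructor
  · rw [mem_grSB]
    refine ⟨fun i => Nat.succ_le_succ (Nat.zero_le _), fun a b hab => ?_, fun i => by omega⟩
    have : (a : ℕ) < b := hab
    show (a : ℕ) + 1 < (b : ℕ) + 1
    omega
  · intro s hs
    obtain ⟨h1, h2, h3⟩ := mem_grSB.mp hs
    funext i
    have := grSB_lb h1 h2 i
    have := h3 i
    omega

lemma grGP_diag (q n : ℕ) : grGP q n n = 1 := by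
  rw [grGP, grSB_diag, Finset.sum_singleton, grSum_id]
  simp

lemma grGP_succ (q n d : ℕ) (hd : d + 1 ≤ n) :
    grGP q (n + 1) (d + 1) = grGP q n (d + 1) + q ^ (n - d) * grGP q n d := by
  classical
  rw [grGP, ← Finset.sum_filter_add_sum_filter_not (grSB (n + 1) (d + 1)) (fun s => s 0 = 1)]
  have E1 : ∑ s ∈ (grSB (n + 1) (d + 1)).filter (fun s => ¬ s 0 = 1),
      q ^ ((d + 1) * ((n + 1) - (d + 1)) + (d + 1) * (d + 1 + 1) / 2 - ∑ i, s i)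
      = grGP q n (d + 1) := by
    rw [grGP]
    refine Finset.sum_bij' (fun s _ => fun k => s k - 1) (fun s _ => fun k => s k + 1)
      ?_ ?_ ?_ ?_ ?_
    · -- hi
      intro s hs
      obtain ⟨hmem, hne⟩ := Finset.mem_filter.mp hs
      obtain ⟨h1, h2, h3⟩ := mem_grSB.mp hmem
      have h2' : ∀ k, 2 ≤ s k := by
        intro k
        rcases eq_or_ne k 0 with rfl | hk
        · have := h1 0; omega
        · have := h2 (Fin.pos_of_ne_zero hk)
          have := h1 0; omega
      rw [mem_grSB]
      refine ⟨?_, ?_, ?_⟩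
      · intro k
        show 1 ≤ s k - 1
        have := h2' k; omega
      · intro a b hab
        have := h2 hab
        have := h2' a
        show s a - 1 < s b - 1
        omega
      · intro k
        have := h3 k
        have hk : (k : ℕ) < d + 1 := k.2
        show s k - 1 ≤ n - (d + 1) + (k : ℕ) + 1
        omega
    · -- hj
      intro s hs
      obtain ⟨h1, h2, h3⟩ := mem_grSB.mp hs
      rw [Finset.mem_filter]
      constructor
      · rw [mem_grSB]
        refine ⟨?_, ?_, ?_⟩
        · intro k
          show 1 ≤ s k + 1
          omega
        · intro a b hab
          have := h2 hab
          show s a + 1 < s b + 1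
          omega
        · intro k
          have := h3 k
          show s k + 1 ≤ (n + 1) - (d + 1) + (k : ℕ) + 1
          omega
      · have := h1 0
        show ¬ (s 0 + 1 = 1)
        omega
    · -- left inv
      intro s hs
      obtain ⟨hmem, _⟩ := Finset.mem_filter.mp hs
      obtain ⟨h1, _, _⟩ := mem_grSB.mp hmem
      funext k
      have := h1 k
      show s k - 1 + 1 = s k
      omega
    · -- right inv
      intro s _
      funext k
      show s k + 1 - 1 = s k
      omega
    · -- values
      intro s hs
      obtain ⟨hmem, _⟩ := Finset.mem_filter.mp hs
      obtain ⟨h1, h2, h3⟩ := mem_grSB.mp hmem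
      congr 1
      have hsum : ∑ k : Fin (d + 1), s k = (∑ k : Fin (d + 1), (s k - 1)) + (d + 1) := by
        have hh : ∀ k : Fin (d + 1), s k = (s k - 1) + 1 := fun k => by have := h1 k; omega
        calc ∑ k : Fin (d + 1), s k = ∑ k : Fin (d + 1), ((s k - 1) + 1) :=
              Finset.sum_congr rfl fun k _ => hh k
          _ = (∑ k : Fin (d + 1), (s k - 1)) + ∑ _k : Fin (d + 1), 1 := Finset.sum_add_distrib
          _ = _ := by simp
      have h4 : (d + 1) * ((n + 1) - (d + 1)) = (d + 1) * (n - (d + 1)) + (d + 1) := by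
        have hh : (n + 1) - (d + 1) = (n - (d + 1)) + 1 := by omega
        rw [hh, Nat.mul_succ]
      beta_reduce
      omega
  have E2 : ∑ s ∈ (grSB (n + 1) (d + 1)).filter (fun s => s 0 = 1),
      q ^ ((d + 1) * ((n + 1) - (d + 1)) + (d + 1) * (d + 1 + 1) / 2 - ∑ i, s i)
      = q ^ (n - d) * grGP q n d := by
    clear E1
    rw [grGP, Finset.mul_sum]
    refine Finset.sum_bij' (fun s _ => fun k : Fin d => s k.succ - 1)
      (fun s _ => Fin.cons 1 (fun k => s k + 1)) ?_ ?_ ?_ ?_ ?_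
    · -- hi
      intro s hs
      obtain ⟨hmem, h0⟩ := Finset.mem_filter.mp hs
      obtain ⟨h1, h2, h3⟩ := mem_grSB.mp hmem
      have h2' : ∀ k : Fin d, 2 ≤ s k.succ := by
        intro k
        have := h2 (Fin.succ_pos k)
        have := h1 0
        omega
      rw [mem_grSB]
      refine ⟨?_, ?_, ?_⟩
      · intro k
        show 1 ≤ s k.succ - 1
        have := h2' k; omega
      · intro a b hab
        have := h2 (Fin.succ_lt_succ_iff.mpr hab)
        have := h2' a
        show s a.succ - 1 < s b.succ - 1
        omega
      · intro k
        have := h3 k.succ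
        have hv : (k.succ : ℕ) = (k : ℕ) + 1 := rfl
        show s k.succ - 1 ≤ n - d + (k : ℕ) + 1
        omega
    · -- hj
      intro s hs
      obtain ⟨h1, h2, h3⟩ := mem_grSB.mp hs
      rw [Finset.mem_filter]
      refine ⟨?_, ?_⟩
      · rw [mem_grSB]
        refine ⟨?_, ?_, ?_⟩
        · intro k
          induction k using Fin.cases with
          | zero => simp
          | succ m => simp
        · intro a b hab
          induction a using Fin.cases with
          | zero =>
            induction b using Fin.cases with
            | zero => exact absurd hab (lt_irrefl _)
            | succ m =>
              simp only [Fin.cons_zero, Fin.cons_succ]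
              have := h1 m; omega
          | succ m =>
            induction b using Fin.cases with
            | zero => exact absurd hab (by simp [Fin.lt_def])
            | succ m' =>
              simp only [Fin.cons_succ]
              have := h2 (Fin.succ_lt_succ_iff.mp hab)
              omega
        · intro k
          induction k using Fin.cases with
          | zero =>
            simp only [Fin.cons_zero]
            omega
          | succ m =>
            simp only [Fin.cons_succ]
            have := h3 m
            have hv : (m.succ : ℕ) = (m : ℕ) + 1 := rfl
            omega
      · simp
    · -- left inv
      intro s hs
      obtain ⟨hmem, h0⟩ := Finset.mem_filter.mp hs
      obtain ⟨h1, h2, _⟩ := mem_grSB.mp hmem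
      have h2' : ∀ k : Fin d, 2 ≤ s k.succ := by
        intro k
        have := h2 (Fin.succ_pos k)
        have := h1 0
        omega
      funext k
      induction k using Fin.cases with
      | zero => simpa using h0.symm
      | succ m =>
        simp only [Fin.cons_succ]
        have := h2' m
        omega
    · -- right inv
      intro s _
      funext k
      simp only [Fin.cons_succ]
      omega
    · -- values
      intro s hs
      obtain ⟨hmem, h0⟩ := Finset.mem_filter.mp hs
      obtain ⟨h1, h2, h3⟩ := mem_grSB.mp hmem
      have h2' : ∀ k : Fin d, 2 ≤ s k.succ := by
        intro k
        have := h2 (Fin.succ_pos k)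
        have := h1 0
        omega
      rw [← pow_add]
      congr 1
      have hsum : ∑ k : Fin (d + 1), s k = (∑ k : Fin d, (s k.succ - 1)) + (d + 1) := by
        rw [Fin.sum_univ_succ, h0]
        have hh : ∀ k : Fin d, s k.succ = (s k.succ - 1) + 1 := fun k => by have := h2' k; omega
        calc 1 + ∑ k : Fin d, s k.succ = 1 + ∑ k : Fin d, ((s k.succ - 1) + 1) := by
              rw [Finset.sum_congr rfl fun k _ => hh k]
          _ = 1 + ((∑ k : Fin d, (s k.succ - 1)) + ∑ _k : Fin d, 1) := by
              rw [Finset.sum_add_distrib]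
          _ = _ := by simp; omega
      have hA : (∑ k : Fin d, (s k.succ - 1)) ≤ d * (n - d) + d * (d + 1) / 2 := by
        have hmem2 : (fun k : Fin d => s k.succ - 1) ∈ grSB n d := by
          rw [mem_grSB]
          refine ⟨?_, ?_, ?_⟩
          · intro k
            show 1 ≤ s k.succ - 1
            have := h2' k; omega
          · intro a b hab
            have := h2 (Fin.succ_lt_succ_iff.mpr hab)
            have := h2' a
            show s a.succ - 1 < s b.succ - 1
            omega
          · intro k
            have := h3 k.succ
            have hv : (k.succ : ℕ) = (k : ℕ) + 1 := rfl
            show s k.succ - 1 ≤ n - d + (k : ℕ) + 1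
            omega
        exact grSB_sum_ub (by omega) hmem2
      have h4 : (d + 1) * ((n + 1) - (d + 1)) = d * (n - d) + (n - d) := by
        have hh : (n + 1) - (d + 1) = n - d := by omega
        rw [hh, Nat.succ_mul]
      have h5 : (d + 1) * (d + 1 + 1) / 2 = d * (d + 1) / 2 + (d + 1) := c2_succ d
      beta_reduce
      omega
  rw [E1, E2]
  exact add_comm _ _

end Combinatorial

section Subspaces

variable (F : Type*) [Field F] [Fintype F]

/-- Number of `d`-dimensional subspaces of `F^n`. -/
noncomputable def grCard (n d : ℕ) : ℕ :=
  Nat.card {W : Submodule F (Fin n → F) // Module.finrank F W = d}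

variable {F}

lemma grCard_zero (n : ℕ) : grCard F n 0 = 1 := by
  rw [grCard, Nat.card_eq_one_iff_unique]
  constructor
  · constructor
    rintro ⟨W, hW⟩ ⟨W', hW'⟩
    apply Subtype.ext
    show W = W'
    rw [Submodule.finrank_eq_zero.mp hW, Submodule.finrank_eq_zero.mp hW']
  · exact ⟨⟨⊥, finrank_bot F _⟩⟩

lemma grCard_diag (n : ℕ) : grCard F n n = 1 := by
  rw [grCard, Nat.card_eq_one_iff_unique]
  constructor
  · constructor
    rintro ⟨W, hW⟩ ⟨W', hW'⟩
    apply Subtype.ext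
    show W = W'
    have h1 : W = ⊤ := Submodule.eq_top_of_finrank_eq (by rw [hW, finrank_fin_fun])
    have h2 : W' = ⊤ := Submodule.eq_top_of_finrank_eq (by rw [hW', finrank_fin_fun])
    rw [h1, h2]
  · exact ⟨⟨⊤, by rw [finrank_top, finrank_fin_fun]⟩⟩

/-- Generic counting helper: if all fibers of `f` have cardinality `k`. -/
lemma card_of_fibers {α β : Type*} [Finite α] [Finite β] (f : α → β) (k : ℕ)
    (h : ∀ b : β, Nat.card {a // f a = b} = k) : Nat.card α = Nat.card β * k := by
  classical
  have : Fintype α := Fintype.ofFinite α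
  have : Fintype β := Fintype.ofFinite β
  rw [← Nat.card_congr (Equiv.sigmaFiberEquiv f), Nat.card_eq_fintype_card,
    Fintype.card_sigma]
  have h' : ∀ b : β, Fintype.card {a // f a = b} = k := fun b => by
    rw [← Nat.card_eq_fintype_card]; exact h b
  rw [Finset.sum_congr rfl fun b _ => h' b, Finset.sum_const, Finset.card_univ,
    smul_eq_mul, Nat.card_eq_fintype_card]

lemma card_split {α : Type*} [Finite α] (p r : α → Prop) :
    Nat.card {x // p x} = Nat.card {x // p x ∧ r x} + Nat.card {x // p x ∧ ¬ r x} := by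
  classical
  rw [← Nat.card_sum]
  exact (Nat.card_congr (((Equiv.subtypeSubtypeEquivSubtypeInter p r).symm.sumCongr
    (Equiv.subtypeSubtypeEquivSubtypeInter p fun x => ¬ r x).symm).trans
    (Equiv.sumCompl fun x : {x // p x} => r x.1))).symm

lemma natCard_submodule {V : Type*} [AddCommGroup V] [Module F V] [Fintype V]
    (p : Submodule F V) : Nat.card p = Fintype.card F ^ finrank F p := by
  classical
  have : Fintype p := Fintype.ofFinite p
  rw [Nat.card_eq_fintype_card]
  exact card_eq_pow_finrank

variable (F) in
/-- Extension by zero `F^n → F^(n+1)`. -/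
def grJ (n : ℕ) : (Fin n → F) →ₗ[F] (Fin (n + 1) → F) where
  toFun x := Fin.snoc x 0
  map_add' x y := by
    funext i
    induction i using Fin.lastCases with
    | last => simp
    | cast i => simp
  map_smul' c x := by
    funext i
    induction i using Fin.lastCases with
    | last => simp
    | cast i => simp

variable (F) in
/-- Projection to the last coordinate. -/
def grPi (n : ℕ) : (Fin (n + 1) → F) →ₗ[F] F := LinearMap.proj (Fin.last n)

lemma grJ_inj (n : ℕ) : Function.Injective (grJ F n) := by
  intro x y h
  funext i
  have := congrFun h (Fin.castSucc i)
  simpa [grJ] using this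

lemma range_grJ (n : ℕ) : LinearMap.range (grJ F n) = LinearMap.ker (grPi F n) := by
  ext v
  simp only [LinearMap.mem_range, LinearMap.mem_ker]
  constructor
  · rintro ⟨x, rfl⟩
    simp [grJ, grPi]
  · intro hv
    refine ⟨fun i => v (Fin.castSucc i), funext fun i => ?_⟩
    induction i using Fin.lastCases with
    | last => simpa [grJ, grPi] using hv.symm
    | cast i => simp [grJ]

lemma finrank_map_grJ (n : ℕ) (W' : Submodule F (Fin n → F)) :
    finrank F (W'.map (grJ F n)) = finrank F W' :=
  ((Submodule.equivMapOfInjective _ (grJ_inj n) W').finrank_eq).symm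

lemma finrank_comap_grJ (n : ℕ) (W : Submodule F (Fin (n + 1) → F))
    (hW : W ≤ LinearMap.ker (grPi F n)) :
    finrank F (W.comap (grJ F n)) = finrank F W := by
  have h : (W.comap (grJ F n)).map (grJ F n) = W := by
    rw [Submodule.map_comap_eq, range_grJ]
    exact inf_eq_right.mpr hW
  conv_rhs => rw [← h]
  rw [finrank_map_grJ]

section lattice

variable {n : ℕ}

local notation "K" => LinearMap.ker (grPi F n)
local notation "π" => grPi F n

lemma gr_inf_sup_span (W : Submodule F (Fin (n + 1) → F)) (v : Fin (n + 1) → F)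
    (hv : v ∈ W) (h1 : π v = 1) :
    (W ⊓ K) ⊔ Submodule.span F {v} = W := by
  apply le_antisymm
  · exact sup_le inf_le_left ((Submodule.span_singleton_le_iff_mem _ _).mpr hv)
  · intro w hw
    have hmem : w - π w • v ∈ W ⊓ K := by
      refine ⟨sub_mem hw (Submodule.smul_mem _ _ hv), LinearMap.mem_ker.mpr ?_⟩
      rw [map_sub, map_smul, h1, smul_eq_mul, mul_one, sub_self]
    have : w = (w - π w • v) + π w • v := by abel
    rw [this]
    exact add_mem (Submodule.mem_sup_left hmem)
      (Submodule.mem_sup_right (Submodule.smul_mem _ _ (Submodule.mem_span_singleton_self v)))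

lemma gr_sup_inf_K (M : Submodule F (Fin (n + 1) → F)) (hM : M ≤ K)
    (v : Fin (n + 1) → F) (h1 : π v = 1) :
    (M ⊔ Submodule.span F {v}) ⊓ K = M := by
  apply le_antisymm
  · rintro x ⟨hx1, hx2⟩
    obtain ⟨m, hm, z, hz, rfl⟩ := Submodule.mem_sup.mp hx1
    obtain ⟨c, rfl⟩ := Submodule.mem_span_singleton.mp hz
    have hπm : π m = 0 := hM hm
    have hπx : π (m + c • v) = 0 := hx2
    have hc : c = 0 := by
      simpa [map_add, map_smul, hπm, h1] using hπx
    simpa [hc] using hm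
  · exact le_inf le_sup_left hM

lemma gr_inf_span_bot (M : Submodule F (Fin (n + 1) → F)) (hM : M ≤ K)
    (v : Fin (n + 1) → F) (h1 : π v = 1) :
    M ⊓ Submodule.span F {v} = ⊥ := by
  rw [eq_bot_iff]
  rintro x ⟨hx1, hx2⟩
  obtain ⟨c, rfl⟩ := Submodule.mem_span_singleton.mp hx2
  have hπ : π (c • v) = 0 := hM hx1
  have hc : c = 0 := by simpa [map_smul, h1] using hπ
  simp [hc]

lemma gr_finrank_sup_span {d : ℕ} (M : Submodule F (Fin (n + 1) → F)) (hM : M ≤ K)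
    (v : Fin (n + 1) → F) (h1 : π v = 1) (hMr : finrank F M = d) :
    finrank F (M ⊔ Submodule.span F {v} : Submodule F (Fin (n + 1) → F)) = d + 1 := by
  have hv0 : v ≠ 0 := by
    intro h
    rw [h, map_zero] at h1
    exact one_ne_zero h1.symm
  have h := Submodule.finrank_sup_add_finrank_inf_eq M (Submodule.span F {v})
  rw [gr_inf_span_bot M hM v h1, finrank_bot, finrank_span_singleton hv0, hMr] at h
  omega

set_option synthInstance.maxHeartbeats 1000000 in
set_option maxHeartbeats 1000000 in
lemma gr_finrank_inf_K {d : ℕ} (W : Submodule F (Fin (n + 1) → F))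
    (hW : finrank F W = d + 1) (v₀ : Fin (n + 1) → F) (hv₀ : v₀ ∈ W) (h1 : π v₀ = 1) :
    finrank F (W ⊓ K : Submodule F (Fin (n + 1) → F)) = d := by
  set f := (π).comp W.subtype with hf
  have hker : LinearMap.ker f = Submodule.comap W.subtype K := LinearMap.ker_comp _ _
  have hmap : (LinearMap.ker f).map W.subtype = W ⊓ K := by
    rw [hker, Submodule.map_comap_subtype]
  have hrk : finrank F (W ⊓ K : Submodule F (Fin (n + 1) → F)) = finrank F (LinearMap.ker f) := by
    conv_lhs => rw [← hmap]
    exact ((Submodule.equivMapOfInjective _ (Submodule.injective_subtype W)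
      (LinearMap.ker f)).finrank_eq).symm
  have hsurj : LinearMap.range f = ⊤ := by
    rw [LinearMap.range_eq_top]
    intro c
    exact ⟨c • ⟨v₀, hv₀⟩, by simp [hf, h1, smul_eq_mul]⟩
  have hrn := LinearMap.finrank_range_add_finrank_ker f
  rw [hsurj, finrank_top, finrank_self, hW] at hrn
  omega

set_option synthInstance.maxHeartbeats 1000000 in
set_option maxHeartbeats 1000000 in
lemma gr_card_coset {d : ℕ} (W : Submodule F (Fin (n + 1) → F)) (hW : finrank F W = d + 1)
    (v₀ : Fin (n + 1) → F) (hv₀ : v₀ ∈ W) (h1 : π v₀ = 1) :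
    Nat.card {v : Fin (n + 1) → F // v ∈ W ∧ π v = 1} = Fintype.card F ^ d := by
  have e : {v : Fin (n + 1) → F // v ∈ W ∧ π v = 1} ≃
      (W ⊓ K : Submodule F (Fin (n + 1) → F)) :=
    { toFun := fun v => ⟨v.1 - v₀, sub_mem v.2.1 hv₀,
        LinearMap.mem_ker.mpr (by rw [map_sub, v.2.2, h1, sub_self])⟩
      invFun := fun u => ⟨u.1 + v₀, add_mem (Submodule.mem_inf.mp u.2).1 hv₀, by
        rw [map_add, LinearMap.mem_ker.mp (Submodule.mem_inf.mp u.2).2, h1, zero_add]⟩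
      left_inv := fun v => Subtype.ext (by simp)
      right_inv := fun u => Subtype.ext (by simp) }
  rw [Nat.card_congr e, natCard_submodule, gr_finrank_inf_K W hW v₀ hv₀ h1]

end lattice


set_option synthInstance.maxHeartbeats 1000000 in
set_option maxHeartbeats 2000000 in
lemma grCard_succ (n d : ℕ) (hd : d ≤ n) :
    grCard F (n + 1) (d + 1) =
      grCard F n (d + 1) + Fintype.card F ^ (n - d) * grCard F n d := by
  classical
  set q := Fintype.card F with hq
  have hsplit := card_split (fun W : Submodule F (Fin (n + 1) → F) => finrank F W = d + 1)
      (fun W => W ≤ LinearMap.ker (grPi F n))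
  have e1 : {W : Submodule F (Fin (n + 1) → F) //
        finrank F W = d + 1 ∧ W ≤ LinearMap.ker (grPi F n)} ≃
      {W' : Submodule F (Fin n → F) // finrank F W' = d + 1} :=
    { toFun := fun W => ⟨W.1.comap (grJ F n), by
        rw [finrank_comap_grJ n W.1 W.2.2]; exact W.2.1⟩
      invFun := fun W' => ⟨W'.1.map (grJ F n), by
        refine ⟨?_, ?_⟩
        · rw [finrank_map_grJ]; exact W'.2
        · rw [← range_grJ]; exact LinearMap.map_le_range⟩
      left_inv := fun W => Subtype.ext (by
        show (W.1.comap (grJ F n)).map (grJ F n) = W.1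
        rw [Submodule.map_comap_eq, range_grJ]
        exact inf_eq_right.mpr W.2.2)
      right_inv := fun W' => Subtype.ext (by
        show (W'.1.map (grJ F n)).comap (grJ F n) = W'.1
        rw [Submodule.comap_map_eq, LinearMap.ker_eq_bot.mpr (grJ_inj n), sup_bot_eq]) }
  have hcase1 : Nat.card {W : Submodule F (Fin (n + 1) → F) //
        finrank F W = d + 1 ∧ W ≤ LinearMap.ker (grPi F n)}
      = grCard F n (d + 1) := Nat.card_congr e1
  have hP1 : Nat.card {p : Submodule F (Fin (n + 1) → F) × (Fin (n + 1) → F) //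
        finrank F p.1 = d + 1 ∧ p.2 ∈ p.1 ∧ grPi F n p.2 = 1}
      = Nat.card {W : Submodule F (Fin (n + 1) → F) //
          finrank F W = d + 1 ∧ ¬ W ≤ LinearMap.ker (grPi F n)}
        * q ^ d := by
    apply card_of_fibers
      (fun p => ⟨p.1.1, p.2.1, fun hle => by
        have h0 : grPi F n p.1.2 = 0 := LinearMap.mem_ker.mp (hle p.2.2.1)
        rw [p.2.2.2] at h0
        exact one_ne_zero h0⟩)
    intro b
    obtain ⟨x, hxW, hxK⟩ := SetLike.not_le_iff_exists.mp b.2.2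
    have hc : grPi F n x ≠ 0 := fun h => hxK (LinearMap.mem_ker.mpr h)
    set v₀ := (grPi F n x)⁻¹ • x with hv₀def
    have hv₀ : v₀ ∈ b.1 := Submodule.smul_mem _ _ hxW
    have h1 : grPi F n v₀ = 1 := by
      rw [hv₀def, map_smul, smul_eq_mul, inv_mul_cancel₀ hc]
    have efib : {a : {p : Submodule F (Fin (n + 1) → F) × (Fin (n + 1) → F) //
          finrank F p.1 = d + 1 ∧ p.2 ∈ p.1 ∧ grPi F n p.2 = 1} //
          (⟨a.1.1, a.2.1, fun hle => by
            have h0 : grPi F n a.1.2 = 0 := LinearMap.mem_ker.mp (hle a.2.2.1)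
            rw [a.2.2.2] at h0
            exact one_ne_zero h0⟩ : {W : Submodule F (Fin (n + 1) → F) //
              finrank F W = d + 1 ∧ ¬ W ≤ LinearMap.ker (grPi F n)}) = b} ≃
        {v : Fin (n + 1) → F // v ∈ b.1 ∧ grPi F n v = 1} :=
      { toFun := fun a => ⟨a.1.1.2, by
          have hb : a.1.1.1 = b.1 := congrArg Subtype.val a.2
          exact ⟨hb ▸ a.1.2.2.1, a.1.2.2.2⟩⟩
        invFun := fun v => ⟨⟨(b.1, v.1), b.2.1, v.2.1, v.2.2⟩, Subtype.ext rfl⟩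
        left_inv := fun a => Subtype.ext (Subtype.ext
          (Prod.ext (congrArg Subtype.val a.2).symm rfl))
        right_inv := fun v => rfl }
    rw [Nat.card_congr efib]
    exact gr_card_coset b.1 b.2.1 v₀ hv₀ h1
  have hP2 : Nat.card {p : Submodule F (Fin (n + 1) → F) × (Fin (n + 1) → F) //
        finrank F p.1 = d + 1 ∧ p.2 ∈ p.1 ∧ grPi F n p.2 = 1}
      = grCard F n d * q ^ n := by
    have ePairs : {p : Submodule F (Fin (n + 1) → F) × (Fin (n + 1) → F) //
          finrank F p.1 = d + 1 ∧ p.2 ∈ p.1 ∧ grPi F n p.2 = 1} ≃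
        {W' : Submodule F (Fin n → F) // finrank F W' = d} ×
          {v : Fin (n + 1) → F // grPi F n v = 1} :=
      { toFun := fun p => ⟨⟨(p.1.1 ⊓ LinearMap.ker (grPi F n)).comap (grJ F n), by
            rw [finrank_comap_grJ n _ inf_le_right]
            exact gr_finrank_inf_K p.1.1 p.2.1 p.1.2 p.2.2.1 p.2.2.2⟩,
          ⟨p.1.2, p.2.2.2⟩⟩
        invFun := fun b => ⟨⟨(b.1.1.map (grJ F n)) ⊔ Submodule.span F {b.2.1}, b.2.1⟩,
          ⟨gr_finrank_sup_span _ (by rw [← range_grJ]; exact LinearMap.map_le_range)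
              _ b.2.2 (by rw [finrank_map_grJ]; exact b.1.2),
            Submodule.mem_sup_right (Submodule.mem_span_singleton_self _),
            b.2.2⟩⟩
        left_inv := fun p => Subtype.ext (Prod.ext (by
          show (((p.1.1 ⊓ LinearMap.ker (grPi F n)).comap (grJ F n)).map (grJ F n))
              ⊔ Submodule.span F {p.1.2} = p.1.1
          rw [Submodule.map_comap_eq, range_grJ]
          rw [inf_eq_right.mpr (inf_le_right :
            p.1.1 ⊓ LinearMap.ker (grPi F n) ≤ LinearMap.ker (grPi F n))]
          exact gr_inf_sup_span p.1.1 p.1.2 p.2.2.1 p.2.2.2) rfl)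
        right_inv := fun b => Prod.ext (Subtype.ext (by
            show ((((b.1.1.map (grJ F n)) ⊔ Submodule.span F {b.2.1}) ⊓
              LinearMap.ker (grPi F n)).comap (grJ F n)) = b.1.1
            rw [gr_sup_inf_K _ (by rw [← range_grJ]; exact LinearMap.map_le_range)
              _ b.2.2, Submodule.comap_map_eq, LinearMap.ker_eq_bot.mpr (grJ_inj n),
              sup_bot_eq]))
          (Subtype.ext rfl) }
    rw [Nat.card_congr ePairs, Nat.card_prod]
    congr 1
    have h1 : grPi F n (Pi.single (Fin.last n) (1 : F)) = 1 := by
      simp [grPi]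
    have ev : {v : Fin (n + 1) → F // grPi F n v = 1} ≃ LinearMap.ker (grPi F n) :=
      { toFun := fun v => ⟨v.1 - Pi.single (Fin.last n) 1,
          LinearMap.mem_ker.mpr (by rw [map_sub, v.2, h1, sub_self])⟩
        invFun := fun u => ⟨u.1 + Pi.single (Fin.last n) 1, by
          rw [map_add, LinearMap.mem_ker.mp u.2, h1, zero_add]⟩
        left_inv := fun v => Subtype.ext (by simp)
        right_inv := fun u => Subtype.ext (by simp) }
    rw [Nat.card_congr ev, natCard_submodule]
    congr 1
    have hfr : finrank F (Fin n → F) = finrank F (LinearMap.ker (grPi F n)) := by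
      rw [← range_grJ]
      exact (LinearEquiv.ofInjective (grJ F n) (grJ_inj n)).finrank_eq
    rw [← hfr, finrank_fin_fun]
  have hqq : q ^ n = q ^ (n - d) * q ^ d := by
    rw [← pow_add]
    congr 1
    omega
  have hC2 : Nat.card {W : Submodule F (Fin (n + 1) → F) //
        finrank F W = d + 1 ∧ ¬ W ≤ LinearMap.ker (grPi F n)}
      = grCard F n d * q ^ (n - d) := by
    have hq0 : 0 < q := Fintype.card_pos (α := F)
    apply Nat.eq_of_mul_eq_mul_right (pow_pos hq0 d)
    rw [← hP1, hP2, hqq, ← mul_assoc]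
  have hdef : grCard F (n + 1) (d + 1) = Nat.card {W : Submodule F (Fin (n + 1) → F) //
      finrank F W = d + 1} := rfl
  rw [hdef, hsplit, hcase1, hC2, mul_comm]

end Subspaces

lemma gr_main {F : Type*} [Field F] [Fintype F] : ∀ n d : ℕ, d ≤ n →
    grCard F n d = grGP (Fintype.card F) n d := by
  intro n
  induction n with
  | zero =>
    intro d hd
    have h0 : d = 0 := Nat.le_zero.mp hd
    subst h0
    rw [grCard_zero, grGP_zero]
  | succ n ih =>
    intro d hd
    match d with
    | 0 => rw [grCard_zero, grGP_zero]
    | (e + 1) =>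
      by_cases h : e + 1 ≤ n
      · rw [grCard_succ n e (by omega), grGP_succ _ n e h, ih (e + 1) h, ih e (by omega)]
      · have he : e = n := by omega
        subst he
        rw [grCard_diag, grGP_diag]

/-- Over a finite field with `q` elements, `|Gr_F(d,n)|` is a monic polynomial expression in
`q` of degree `d(n-d)` with nonnegative integer coefficients:
`|Gr_F(d,n)| = ∑_{ℓ=0}^{d(n-d)} c_ℓ q^{d(n-d)-ℓ}`, where `c_ℓ` is the number of tuples in
`S⁽ᵈ⁾` with `∑ᵢ sᵢ = ℓ + d(d+1)/2`; monicity means `c₀ = 1`. -/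
theorem card_grassmannian_polynomial {F : Type*} [Field F] [Fintype F] {q n d : ℕ}
    (hq : Fintype.card F = q) (hd : d ≤ n) :
    Nat.card {W : Submodule F (Fin n → F) // Module.finrank F W = d} =
      (∑ ℓ ∈ Finset.range (d * (n - d) + 1),
        Nat.card {s : Fin d → ℕ // (∀ i : Fin d, 1 ≤ s i) ∧ StrictMono s ∧
            (∀ i : Fin d, s i ≤ n - d + (i : ℕ) + 1) ∧
            ∑ i : Fin d, s i = ℓ + d * (d + 1) / 2} * q ^ (d * (n - d) - ℓ)) ∧
    Nat.card {s : Fin d → ℕ // (∀ i : Fin d, 1 ≤ s i) ∧ StrictMono s ∧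
        (∀ i : Fin d, s i ≤ n - d + (i : ℕ) + 1) ∧
        ∑ i : Fin d, s i = 0 + d * (d + 1) / 2} = 1 := by
  classical
  subst hq
  constructor
  · show grCard F n d = _
    rw [gr_main n d hd]
    have hcard : ∀ ℓ : ℕ, Nat.card {s : Fin d → ℕ // (∀ i : Fin d, 1 ≤ s i) ∧ StrictMono s ∧
          (∀ i : Fin d, s i ≤ n - d + (i : ℕ) + 1) ∧
          ∑ i : Fin d, s i = ℓ + d * (d + 1) / 2}
        = ((grSB n d).filter fun s => ∑ i, s i = ℓ + d * (d + 1) / 2).card := by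
      intro ℓ
      rw [← Nat.card_eq_finsetCard]
      apply Nat.card_congr
      apply Equiv.subtypeEquivRight
      intro s
      rw [Finset.mem_filter, mem_grSB]
      tauto
    symm
    calc ∑ ℓ ∈ Finset.range (d * (n - d) + 1),
          Nat.card {s : Fin d → ℕ // (∀ i : Fin d, 1 ≤ s i) ∧ StrictMono s ∧
            (∀ i : Fin d, s i ≤ n - d + (i : ℕ) + 1) ∧
            ∑ i : Fin d, s i = ℓ + d * (d + 1) / 2} * (Fintype.card F) ^ (d * (n - d) - ℓ)
        = ∑ ℓ ∈ Finset.range (d * (n - d) + 1),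
            ∑ _s ∈ (grSB n d).filter (fun s => ∑ i, s i = ℓ + d * (d + 1) / 2),
              (Fintype.card F) ^ (d * (n - d) - ℓ) := by
          refine Finset.sum_congr rfl fun ℓ _ => ?_
          rw [hcard ℓ, Finset.sum_const, smul_eq_mul]
      _ = ∑ ℓ ∈ Finset.range (d * (n - d) + 1),
            ∑ s ∈ (grSB n d).filter
                (fun s => (∑ i, s i) - d * (d + 1) / 2 = ℓ),
              (Fintype.card F) ^ (d * (n - d) + d * (d + 1) / 2 - ∑ i, s i) := by
          refine Finset.sum_congr rfl fun ℓ _ => ?_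
          rw [Finset.filter_congr (fun s hs => by
            have h1 := grSB_sum_lb hs
            constructor
            · intro hh
              have hh' : ∑ i, s i = ℓ + d * (d + 1) / 2 := hh
              show (∑ i, s i) - d * (d + 1) / 2 = ℓ
              omega
            · intro hh
              have hh' : (∑ i, s i) - d * (d + 1) / 2 = ℓ := hh
              show ∑ i, s i = ℓ + d * (d + 1) / 2
              omega)]
          refine Finset.sum_congr rfl fun s hs => ?_
          obtain ⟨hmem, heq⟩ := Finset.mem_filter.mp hs
          have h1 := grSB_sum_lb hmem
          congr 1
          omega
      _ = ∑ s ∈ grSB n d,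
            (Fintype.card F) ^ (d * (n - d) + d * (d + 1) / 2 - ∑ i, s i) :=
          Finset.sum_fiberwise_of_maps_to (fun s hs => Finset.mem_range.mpr (by
            have h1 := grSB_sum_lb hs
            have h2 := grSB_sum_ub hd hs
            omega)) _
      _ = grGP (Fintype.card F) n d := rfl
  · rw [Nat.card_eq_one_iff_unique]
    have huniq : ∀ s : Fin d → ℕ, ((∀ i : Fin d, 1 ≤ s i) ∧ StrictMono s ∧
        (∀ i : Fin d, s i ≤ n - d + (i : ℕ) + 1) ∧
        ∑ i : Fin d, s i = 0 + d * (d + 1) / 2) → s = fun i : Fin d => (i : ℕ) + 1 := by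
      rintro s ⟨h1, h2, h3, h4⟩
      have hlb := grSB_lb h1 h2
      have hsum : ∑ i : Fin d, ((i : ℕ) + 1) = ∑ i : Fin d, s i := by
        rw [grSum_id, h4]
        omega
      have hpt := (Finset.sum_eq_sum_iff_of_le (fun i _ => hlb i)).mp hsum
      funext i
      exact (hpt i (Finset.mem_univ i)).symm
    constructor
    · constructor
      rintro ⟨s, hs⟩ ⟨s', hs'⟩
      apply Subtype.ext
      show s = s'
      rw [huniq s hs, huniq s' hs']
    · refine ⟨⟨fun i : Fin d => (i : ℕ) + 1, ?_, ?_, ?_, ?_⟩⟩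
      · intro i
        show 1 ≤ (i : ℕ) + 1
        omega
      · intro a b hab
        have : (a : ℕ) < b := hab
        show (a : ℕ) + 1 < (b : ℕ) + 1
        omega
      · intro i
        show (i : ℕ) + 1 ≤ n - d + (i : ℕ) + 1
        omega
      · show ∑ i : Fin d, ((i : ℕ) + 1) = 0 + d * (d + 1) / 2
        rw [grSum_id]
        omega
end
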